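/- If Q ∈ ℂ^{n×n} is unitary with columns q₁,…,qₙ and H := Q*AQ is upper Hessenberg with nonzero subdiagonal entries h_{k+1,k} for k < n, then for every k ≤ n, span{q₁,…,q_k} = span{q₁, Aq₁, …, A^{k−1}q₁} = K_k(A, q₁). -/
import Mathlib

open Matrix

/-- The `m`-th polynomial Krylov space `K_m(A,b) = span{b, Ab, …, A^{m−1}b}`. -/
noncomputable def Krylov {n : ℕ} (A : Matrix (Fin n) (Fin n) ℂ) (b : Fin n → ℂ) (m : ℕ) :
    Submodule ℂ (Fin n → ℂ) :=
  Submodule.span ℂ {v | ∃ i < m, v = (A ^ i) *ᵥ b}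

lemma Krylov_mono {n : ℕ} (A : Matrix (Fin n) (Fin n) ℂ) (b : Fin n → ℂ) {m m' : ℕ}
    (h : m ≤ m') : Krylov A b m ≤ Krylov A b m' :=
  Submodule.span_mono (by rintro v ⟨i, hi, rfl⟩; exact ⟨i, lt_of_lt_of_le hi h, rfl⟩)

lemma Krylov_step {n : ℕ} (A : Matrix (Fin n) (Fin n) ℂ) (b : Fin n → ℂ) {m : ℕ}
    {v : Fin n → ℂ} (hv : v ∈ Krylov A b m) : A *ᵥ v ∈ Krylov A b (m+1) := by
  induction hv using Submodule.span_induction with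
  | mem x hx =>
    obtain ⟨i, hi, rfl⟩ := hx
    refine Submodule.subset_span ⟨i+1, by omega, ?_⟩
    rw [mulVec_mulVec, ← pow_succ']
  | zero => simpa using (Krylov A b (m+1)).zero_mem
  | add x y _ _ hx hy => rw [mulVec_add]; exact Submodule.add_mem _ hx hy
  | smul c x _ hx => rw [mulVec_smul]; exact Submodule.smul_mem _ _ hx

lemma krylov_aux {N : ℕ} (A : Matrix (Fin (N+1)) (Fin (N+1)) ℂ)
    (q : Fin (N+1) → Fin (N+1) → ℂ) (H : Matrix (Fin (N+1)) (Fin (N+1)) ℂ)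
    (hcol : ∀ j, A *ᵥ q j = ∑ l, H l j • q l)
    (hHess : ∀ i j : Fin (N+1), (j : ℕ) + 1 < (i : ℕ) → H i j = 0)
    (hSub : ∀ i j : Fin (N+1), (i : ℕ) = (j : ℕ) + 1 → H i j ≠ 0) :
    ∀ k ≤ N + 1,
      Submodule.span ℂ {v | ∃ i : Fin (N+1), (i : ℕ) < k ∧ v = q i}
        = Krylov A (q 0) k := by
  set S : ℕ → Submodule ℂ (Fin (N+1) → ℂ) :=
    fun k => Submodule.span ℂ {v | ∃ i : Fin (N+1), (i : ℕ) < k ∧ v = q i} with hS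
  have Smono : ∀ {k k' : ℕ}, k ≤ k' → S k ≤ S k' := by
    intro k k' h
    exact Submodule.span_mono (by rintro v ⟨i, hi, rfl⟩; exact ⟨i, lt_of_lt_of_le hi h, rfl⟩)
  have Sstep : ∀ (k : ℕ), k ≤ N → ∀ v ∈ S k, A *ᵥ v ∈ S (k+1) := by
    intro k hk v hv
    induction hv using Submodule.span_induction with
    | mem x hx =>
      obtain ⟨j, hj, rfl⟩ := hx
      rw [hcol j]
      refine Submodule.sum_mem _ fun l _ => ?_
      by_cases hl : (l : ℕ) ≤ (j : ℕ) + 1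
      · exact Submodule.smul_mem _ _ (Submodule.subset_span ⟨l, by omega, rfl⟩)
      · rw [hHess l j (by omega), zero_smul]; exact Submodule.zero_mem _
    | zero => simpa using (S (k+1)).zero_mem
    | add x y _ _ hx hy => rw [mulVec_add]; exact Submodule.add_mem _ hx hy
    | smul c x _ hx => rw [mulVec_smul]; exact Submodule.smul_mem _ _ hx
  have claim1 : ∀ i : ℕ, i ≤ N → (A ^ i) *ᵥ q 0 ∈ S (i+1) := by
    intro i
    induction i with
    | zero =>
      intro _
      rw [pow_zero, one_mulVec]
      exact Submodule.subset_span ⟨0, by simp, rfl⟩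
    | succ i ih =>
      intro hi
      rw [pow_succ', ← mulVec_mulVec]
      exact Sstep (i+1) hi _ (ih (by omega))
  have claim2 : ∀ i : ℕ, i ≤ N → ∀ l : Fin (N+1), (l : ℕ) ≤ i →
      q l ∈ Krylov A (q 0) ((l : ℕ) + 1) := by
    intro i
    induction i with
    | zero =>
      intro _ l hl
      have : l = 0 := Fin.ext (by simp only [Fin.val_zero]; omega)
      subst this
      exact Submodule.subset_span ⟨0, by simp, by rw [pow_zero, one_mulVec]⟩
    | succ i ih =>
      intro hi l hl
      by_cases hcase : (l : ℕ) ≤ i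
      · exact ih (by omega) l hcase
      · have hli : (l : ℕ) = i + 1 := by omega
        set j : Fin (N+1) := ⟨i, by omega⟩ with hj
        have hne : H l j ≠ 0 := hSub l j (by simp [hj, hli])
        have hsum : A *ᵥ q j = H l j • q l + ∑ x ∈ Finset.univ.erase l, H x j • q x := by
          rw [hcol j, ← Finset.add_sum_erase _ _ (Finset.mem_univ l)]
        have hql : q l = (H l j)⁻¹ •
            (A *ᵥ q j - ∑ x ∈ Finset.univ.erase l, H x j • q x) := by
          rw [hsum, add_sub_cancel_right, inv_smul_smul₀ hne]
        rw [hql, hli]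
        refine Submodule.smul_mem _ _ (Submodule.sub_mem _ ?_ ?_)
        · have hqj : q j ∈ Krylov A (q 0) (i+1) := by
            simpa using ih (by omega) j (by simp [hj])
          exact Krylov_step A (q 0) hqj
        · refine Submodule.sum_mem _ fun x hx => ?_
          have hxne : x ≠ l := (Finset.mem_erase.mp hx).1
          by_cases hxc : (x : ℕ) ≤ i
          · refine Submodule.smul_mem _ _ ?_
            exact Krylov_mono A (q 0) (by omega) (ih (by omega) x hxc)
          · have : (x : ℕ) > i + 1 := by
              rcases Nat.lt_or_ge (i+1) (x : ℕ) with h | h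
              · exact h
              · exact absurd (Fin.ext (by omega : (x:ℕ) = (l:ℕ))) hxne
            rw [hHess x j (by simp [hj]; omega), zero_smul]
            exact Submodule.zero_mem _
  intro k hk
  apply le_antisymm
  · apply Submodule.span_le.mpr
    rintro v ⟨i, hik, rfl⟩
    exact Krylov_mono A (q 0) (by omega)
      (claim2 N (le_refl N) i (by omega))
  · apply Submodule.span_le.mpr
    rintro v ⟨i, hik, rfl⟩
    exact Smono (show i + 1 ≤ k by omega) (claim1 i (by omega))

/-- If `Q` is unitary and `H = Q*AQ` is upper Hessenberg with nonzero subdiagonal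
entries, then the span of the first `k` columns of `Q` equals the Krylov space
`K_k(A, q₁)` generated by the first column, for every `k ≤ n`. -/
theorem arnoldi_span_eq_krylov {n : ℕ} (A Q : Matrix (Fin (n+1)) (Fin (n+1)) ℂ)
    (hQ : Qᴴ * Q = 1)
    (hHess : ∀ i j : Fin (n+1), (j : ℕ) + 1 < (i : ℕ) → (Qᴴ * A * Q) i j = 0)
    (hSub : ∀ i j : Fin (n+1), (i : ℕ) = (j : ℕ) + 1 → (Qᴴ * A * Q) i j ≠ 0) :
    ∀ k ≤ n + 1,
      Submodule.span ℂ {v | ∃ i : Fin (n+1), (i : ℕ) < k ∧ v = fun r => Q r i}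
        = Krylov A (fun r => Q r 0) k := by
  have hQQ : Q * Qᴴ = 1 := mul_eq_one_comm.mp hQ
  have hAQ : A * Q = Q * (Qᴴ * A * Q) := by
    simp only [← Matrix.mul_assoc]; rw [hQQ, Matrix.one_mul]
  have hcol : ∀ j, A *ᵥ (fun r => Q r j) = ∑ l, (Qᴴ * A * Q) l j • (fun r => Q r l) := by
    intro j
    funext r
    have h1 : (A *ᵥ (fun r => Q r j)) r = (A * Q) r j := by
      simp [Matrix.mulVec, Matrix.mul_apply, dotProduct]
    rw [h1, hAQ, Matrix.mul_apply]
    simp [Finset.sum_apply, mul_comm]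
  exact krylov_aux A (fun j r => Q r j) (Qᴴ * A * Q) hcol hHess hSub
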